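/- Let 𝒜 be a type (the alphabet) and ω a predicate on words over 𝒜; let Prim denote the set of primitive words for ω, and let T denote the set of words w such that no infix of w belongs to Prim (the composition tree). Then for every word w and every letter b: (a) w ++ [b] ∈ T ∪ Prim if and only if w ∈ T and no proper suffix of w ++ [b] belongs to Prim; and (b) if w ∈ T and no proper suffix of w ++ [b] belongs to Prim, then w ++ [b] ∈ Prim if and only if ω (w ++ [b]) holds (and w ++ [b] ∈ T otherwise). [Inductive construction of the composition tree and its primitive vertices.] -/
import Mathlib


/-- A word `v` is primitive for the predicate `ω` if `ω v` holds but `ω` fails on every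
proper infix of `v`. -/
def IsPrimitiveWord {α : Type*} (ω : List α → Prop) (v : List α) : Prop :=
  ω v ∧ ∀ v' : List α, v' <:+: v → v' ≠ v → ¬ ω v'

/-- The composition tree: words containing no primitive infix. -/
def InCompositionTree {α : Type*} (ω : List α → Prop) (w : List α) : Prop :=
  ∀ u : List α, u <:+: w → ¬ IsPrimitiveWord ω u

/-- Every word satisfying `ω` contains a primitive infix. -/
lemma exists_prim_aux {α : Type*} (ω : List α → Prop) :
    ∀ n : ℕ, ∀ u : List α, u.length = n → ω u → ∃ p, p <:+: u ∧ IsPrimitiveWord ω p := by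
  intro n
  induction n using Nat.strong_induction_on with
  | _ n ih =>
    intro u hn hu
    by_cases h : ∀ v', v' <:+: u → v' ≠ u → ¬ ω v'
    · exact ⟨u, List.infix_refl u, hu, h⟩
    · push_neg at h
      obtain ⟨v, hv, hne, hωv⟩ := h
      have hlt : v.length < n :=
        hn ▸ lt_of_le_of_ne hv.length_le (fun he => hne (hv.eq_of_length he))
      obtain ⟨p, hp, hprim⟩ := ih v.length hlt v rfl hωv
      exact ⟨p, hp.trans hv, hprim⟩

lemma exists_prim {α : Type*} (ω : List α → Prop) (u : List α) (hu : ω u) :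
    ∃ p, p <:+: u ∧ IsPrimitiveWord ω p :=
  exists_prim_aux ω u.length u rfl hu

/-- An infix of `w ++ [b]` is either an infix of `w` or a suffix of `w ++ [b]`. -/
lemma infix_concat_cases {α : Type*} {u w : List α} {b : α} (h : u <:+: w ++ [b]) :
    u <:+: w ∨ u <:+ w ++ [b] := by
  obtain ⟨s, t, hst⟩ := h
  rcases List.eq_nil_or_concat t with rfl | ⟨t', c, rfl⟩
  · right; exact ⟨s, by simpa using hst⟩
  · left
    have h2 : (s ++ u ++ t') ++ [c] = w ++ [b] := by
      simpa [List.append_assoc] using hst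
    have h3 : s ++ u ++ t' = w := (List.append_inj' h2 rfl).1
    exact ⟨s, t', h3⟩

theorem stmt_18 {α : Type*} (ω : List α → Prop) (w : List α) (b : α) :
    ((InCompositionTree ω (w ++ [b]) ∨ IsPrimitiveWord ω (w ++ [b])) ↔
      (InCompositionTree ω w ∧
        ∀ s : List α, s <:+ w ++ [b] → s ≠ w ++ [b] → ¬ IsPrimitiveWord ω s)) ∧
    (InCompositionTree ω w →
      (∀ s : List α, s <:+ w ++ [b] → s ≠ w ++ [b] → ¬ IsPrimitiveWord ω s) →
      ((IsPrimitiveWord ω (w ++ [b]) ↔ ω (w ++ [b])) ∧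
        (¬ ω (w ++ [b]) → InCompositionTree ω (w ++ [b])))) := by
  -- Core claim: under the two hypotheses, no proper infix of `w ++ [b]` satisfies `ω`.
  have C1 : InCompositionTree ω w →
      (∀ s : List α, s <:+ w ++ [b] → s ≠ w ++ [b] → ¬ IsPrimitiveWord ω s) →
      ∀ v', v' <:+: w ++ [b] → v' ≠ w ++ [b] → ¬ ω v' := by
    intro hT hs v' hv' hne hω
    obtain ⟨p, hp, hprim⟩ := exists_prim ω v' hω
    have hpinf : p <:+: w ++ [b] := hp.trans hv'
    rcases infix_concat_cases hpinf with h1 | h2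
    · exact hT p h1 hprim
    · by_cases hpe : p = w ++ [b]
      · have h4 : (w ++ [b]).length ≤ v'.length := hpe ▸ hp.length_le
        exact hne (hv'.eq_of_length (le_antisymm hv'.length_le h4))
      · exact hs p h2 hpe hprim
  have Ctree : InCompositionTree ω w →
      (∀ s : List α, s <:+ w ++ [b] → s ≠ w ++ [b] → ¬ IsPrimitiveWord ω s) →
      ¬ ω (w ++ [b]) → InCompositionTree ω (w ++ [b]) := by
    intro hT hs hnω u hu hprim
    rcases infix_concat_cases hu with h1 | h2
    · exact hT u h1 hprim
    · by_cases hue : u = w ++ [b]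
      · exact hnω (hue ▸ hprim.1)
      · exact hs u h2 hue hprim
  constructor
  · constructor
    · rintro (htree | hprim)
      · exact ⟨fun u hu => htree u (hu.trans (List.prefix_append w [b]).isInfix),
          fun s hsfx _ => htree s hsfx.isInfix⟩
      · refine ⟨fun u hu hpu => ?_, fun s hsfx hne hps => hprim.2 s hsfx.isInfix hne hps.1⟩
        have hune : u ≠ w ++ [b] := by
          intro he
          have := hu.length_le
          simp [he] at this
        exact hprim.2 u (hu.trans (List.prefix_append w [b]).isInfix) hune hpu.1
    · rintro ⟨hT, hs⟩
      by_cases hω : ω (w ++ [b])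
      · exact Or.inr ⟨hω, C1 hT hs⟩
      · exact Or.inl (Ctree hT hs hω)
  · intro hT hs
    exact ⟨⟨fun h => h.1, fun hω => ⟨hω, C1 hT hs⟩⟩, Ctree hT hs⟩
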